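/- Let {C_1,…,C_k} be an (α,γ)-clustering of X, let i ≠ j, and let x ∈ C_i and y ∈ C_j. Then ((γ−1)/γ)·Δ(y,C_i) ≤ d(x,y) ≤ ((γ²+1)/(γ·(γ−1)))·Δ(y,C_i). -/

import Mathlib

open Finset

/-- `P(A)`: the probability mass of a finite set `A`. -/
noncomputable def pOf {X : Type*} (P : X → ℝ) (A : Finset X) : ℝ := ∑ x ∈ A, P x

/-- `Δ(x,A)`: the average distance from `x` to `A`,
weighted by the probability mass function `P` restricted to `A`. -/
noncomputable def Dpt {X : Type*} [MetricSpace X] (P : X → ℝ) (x : X) (A : Finset X) : ℝ :=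
  (∑ y ∈ A, P y * dist x y) / pOf P A

/-- `{C_1,…,C_k}` is an `(α,γ)`-clustering: a partition of `X` into nonempty parts, each of
probability at least `α`, such that `Δ(x,C_j) ≥ γ·Δ(x,C_i)` for all `i ≠ j` and `x ∈ C_i`. -/
def IsGoodClustering {X : Type*} [Fintype X] [MetricSpace X] (P : X → ℝ) (α γ : ℝ)
    {k : ℕ} (C : Fin k → Finset X) : Prop :=
  (∀ i, (C i).Nonempty) ∧
  (∀ i j, i ≠ j → Disjoint (C i) (C j)) ∧
  (∀ x : X, ∃ i, x ∈ C i) ∧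
  (∀ i, α ≤ pOf P (C i)) ∧
  (∀ i j, i ≠ j → ∀ x ∈ C i, γ * Dpt P x (C i) ≤ Dpt P x (C j))


lemma pOf_pos {X : Type*} (P : X → ℝ) (hP : ∀ x, 0 < P x) {A : Finset X}
    (hA : A.Nonempty) : 0 < pOf P A :=
  Finset.sum_pos (fun z _ => hP z) hA

lemma Dpt_tri {X : Type*} [MetricSpace X] (P : X → ℝ) (hP : ∀ x, 0 < P x)
    {A : Finset X} (hA : A.Nonempty) (x y : X) :
    Dpt P x A ≤ dist x y + Dpt P y A := by
  have hpA := pOf_pos P hP hA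
  have h1 : ∑ z ∈ A, P z * dist x z ≤ ∑ z ∈ A, P z * (dist x y + dist y z) := by
    apply Finset.sum_le_sum
    intro z _
    exact mul_le_mul_of_nonneg_left (dist_triangle x y z) (hP z).le
  have h2 : ∑ z ∈ A, P z * (dist x y + dist y z)
      = pOf P A * dist x y + ∑ z ∈ A, P z * dist y z := by
    simp [mul_add, Finset.sum_add_distrib, pOf, Finset.sum_mul]
  unfold Dpt
  rw [div_le_iff₀ hpA]
  calc ∑ z ∈ A, P z * dist x z ≤ pOf P A * dist x y + ∑ z ∈ A, P z * dist y z := by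
        rw [← h2]; exact h1
    _ = (dist x y + (∑ z ∈ A, P z * dist y z) / pOf P A) * pOf P A := by
        field_simp

lemma dist_le_Dpt {X : Type*} [MetricSpace X] (P : X → ℝ) (hP : ∀ x, 0 < P x)
    {A : Finset X} (hA : A.Nonempty) (x y : X) :
    dist x y ≤ Dpt P x A + Dpt P y A := by
  have hpA := pOf_pos P hP hA
  have h1 : pOf P A * dist x y ≤ ∑ z ∈ A, P z * dist x z + ∑ z ∈ A, P z * dist y z := by
    rw [pOf, Finset.sum_mul, ← Finset.sum_add_distrib]
    apply Finset.sum_le_sum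
    intro z _
    have := dist_triangle x z y
    nlinarith [hP z, dist_comm y z]
  unfold Dpt
  rw [← add_div, le_div_iff₀ hpA]
  linarith

lemma Dpt_nonneg {X : Type*} [MetricSpace X] (P : X → ℝ) (hP : ∀ x, 0 < P x)
    {A : Finset X} (x : X) : 0 ≤ Dpt P x A := by
  apply div_nonneg
  · exact Finset.sum_nonneg fun z _ => mul_nonneg (hP z).le dist_nonneg
  · exact Finset.sum_nonneg fun z _ => (hP z).le

/-- In an `(α,γ)`-clustering, for `x ∈ C_i`, `y ∈ C_j` with `i ≠ j`,
`((γ−1)/γ)·Δ(y,C_i) ≤ d(x,y) ≤ ((γ²+1)/(γ(γ−1)))·Δ(y,C_i)`. -/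
theorem stmt_1 {X : Type*} [Fintype X] [MetricSpace X]
    (P : X → ℝ) (hP : ∀ x, 0 < P x) (hsum : ∑ x, P x = 1)
    (α γ : ℝ) (hα : 0 < α) (hγ : 1 < γ)
    {k : ℕ} (C : Fin k → Finset X) (hC : IsGoodClustering P α γ C)
    (i j : Fin k) (hij : i ≠ j) (x y : X) (hx : x ∈ C i) (hy : y ∈ C j) :
    ((γ - 1) / γ) * Dpt P y (C i) ≤ dist x y ∧
      dist x y ≤ ((γ ^ 2 + 1) / (γ * (γ - 1))) * Dpt P y (C i) := by
  obtain ⟨hne, hdisj, hcov, hmass, hsep⟩ := hC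
  have hγ0 : 0 < γ := by linarith
  set a := Dpt P y (C i) with ha
  set b := Dpt P y (C j) with hb
  set c := Dpt P x (C i) with hc
  set e := Dpt P x (C j) with he
  set d := dist x y with hd
  have h1 : γ * c ≤ e := hsep i j hij x hx
  have h2 : γ * b ≤ a := hsep j i hij.symm y hy
  have h3 : a ≤ dist y x + c := Dpt_tri P hP (hne i) y x
  have h4 : e ≤ d + b := Dpt_tri P hP (hne j) x y
  have h5 : d ≤ c + a := dist_le_Dpt P hP (hne i) x y
  have hbn : 0 ≤ b := Dpt_nonneg P hP y
  have hd0 : 0 ≤ d := dist_nonneg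
  rw [dist_comm y x] at h3
  constructor
  · rw [div_mul_eq_mul_div, div_le_iff₀ hγ0]
    nlinarith [mul_le_mul_of_nonneg_left h3 hγ0.le, mul_le_mul_of_nonneg_left h2 hγ0.le]
  · rw [div_mul_eq_mul_div, le_div_iff₀ (by nlinarith : (0:ℝ) < γ * (γ - 1))]
    rw [← hd] at h3
    nlinarith [mul_le_mul_of_nonneg_left h1 hγ0.le, mul_le_mul_of_nonneg_left h5 (by nlinarith : (0:ℝ) ≤ γ*(γ-1)), mul_le_mul_of_nonneg_left h4 hγ0.le]
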